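/- Suppose at a KKT point the identities V = α p^H h^H / T hold with T = |h p|² α + r, and the precoder p satisfies (βI + A)p = q as in Theorem 1, where β = (1/E)·∑ η b |V|² and Tr(P P^H) = E. Then taking traces of the two stationarity relations—one obtained by multiplying the receiver stationarity equation by V* η b and summing, the other by pre-multiplying the precoder stationarity equation by p^H and summing over clusters—yields equal left-hand sides, which forces β · Tr(P P^H) = ∑_{k,l,i} η_{k,i→l} b_{k,i→l} |V_{k,i→l}|², i.e., the formula β = E^{-1} ∑ η b |V|². -/
import Mathlib


open Finset

private lemma inner_contract {n : ℕ} (u w : Fin n → ℂ) (a : ℂ) :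
    ∑ m, (starRingEnd ℂ) (w m) * ((starRingEnd ℂ) (u m) * a)
      = (starRingEnd ℂ) (∑ m, u m * w m) * a := by
  rw [map_sum, Finset.sum_mul]
  exact Finset.sum_congr rfl fun m _ => by rw [map_mul]; ring

private lemma offdiag_swap {n : ℕ} (g : Fin n → Fin n → ℂ) :
    ∑ k, ∑ t ∈ univ.filter (fun t => t ≠ k), g t k
      = ∑ k, ∑ t ∈ univ.filter (fun t => t ≠ k), g k t := by
  simp only [Finset.sum_filter]
  rw [Finset.sum_comm]
  refine Finset.sum_congr rfl fun k _ => Finset.sum_congr rfl fun t _ => ?_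
  by_cases hkt : k = t <;> simp [hkt, Ne.symm, fun h => (Ne.symm h : ¬ k = t)]

private lemma sum_mul_sum_swap {ι κ : Type*} (s : Finset ι) (t : Finset κ)
    (c : ι → ℂ) (f : ι → κ → ℂ) :
    ∑ x ∈ s, c x * ∑ y ∈ t, f x y = ∑ y ∈ t, ∑ x ∈ s, c x * f x y := by
  simp only [Finset.mul_sum]; exact Finset.sum_comm

theorem stmt_18 (K L M : ℕ)
    (α : Fin K → Fin L → ℝ) (hα : ∀ k l, 0 < α k l)
    (h : Fin K → Fin L → Fin M → ℂ) (p : Fin K → Fin M → ℂ)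
    (V : Fin K → Fin L → Fin L → ℂ)
    (b η : Fin K → Fin L → Fin L → ℝ)
    (hb : ∀ k i l, 0 < b k i l) (hη : ∀ k i l, 0 ≤ η k i l)
    (E β : ℝ) (hE : 0 < E)
    -- total power constraint Tr(P Pᴴ) = E
    (hpow : ∑ k, ∑ m, Complex.normSq (p k m) = E)
    -- receiver stationarity equation (36):
    -- α_{k,l} p_kᴴ h_{k,i}ᴴ = (∑_{j=l}^{L} α_{k,j}) |h_{k,i} p_k|² V + (∑_{t≠k} |h_{k,i} p_t|²) V + V
    (heq36 : ∀ k l i, l ≤ i →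
      (α k l : ℂ) * (starRingEnd ℂ) (∑ m, h k i m * p k m)
        = (∑ j ∈ univ.filter (fun j => l ≤ j), (α k j : ℂ))
            * (Complex.normSq (∑ m, h k i m * p k m) : ℂ) * V k i l
          + (∑ t ∈ univ.filter (fun t => t ≠ k),
              (Complex.normSq (∑ m, h k i m * p t m) : ℂ)) * V k i l
          + V k i l)
    -- precoder stationarity equation (38), componentwise in m:
    (heq38 : ∀ k m,
      ∑ l, ∑ i ∈ univ.filter (fun i => l ≤ i),
          (η k i l : ℂ) * (b k i l : ℂ) * (starRingEnd ℂ) (h k i m)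
            * (starRingEnd ℂ) (V k i l) * (α k l : ℂ)
        = (∑ l, ∑ i ∈ univ.filter (fun i => l ≤ i), ∑ j ∈ univ.filter (fun j => l ≤ j),
              (α k j : ℂ) * (η k i l : ℂ) * (b k i l : ℂ) * (starRingEnd ℂ) (h k i m)
                * (Complex.normSq (V k i l) : ℂ) * (∑ m', h k i m' * p k m'))
          + (∑ t ∈ univ.filter (fun t => t ≠ k), ∑ l, ∑ i ∈ univ.filter (fun i => l ≤ i),
              (η t i l : ℂ) * (b t i l : ℂ) * (starRingEnd ℂ) (h t i m)
                * (Complex.normSq (V t i l) : ℂ) * (∑ m', h t i m' * p k m'))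
          + (β : ℂ) * p k m) :
    β = E⁻¹ * ∑ k, ∑ l, ∑ i ∈ univ.filter (fun i => l ≤ i),
          η k i l * b k i l * Complex.normSq (V k i l) := by
  -- Equation (36) contracted with η·b·conj(V):
  have E36 : (∑ k, ∑ l, ∑ i ∈ univ.filter (fun i => l ≤ i),
        (η k i l : ℂ) * (b k i l : ℂ) * (starRingEnd ℂ) (V k i l) *
          ((α k l : ℂ) * (starRingEnd ℂ) (∑ m, h k i m * p k m)))
      = (∑ k, ∑ l, ∑ i ∈ univ.filter (fun i => l ≤ i),
            ((η k i l : ℂ) * (b k i l : ℂ)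
              * (∑ j ∈ univ.filter (fun j => l ≤ j), (α k j : ℂ))
              * (Complex.normSq (∑ m, h k i m * p k m) : ℂ)
              * (Complex.normSq (V k i l) : ℂ)
            + (η k i l : ℂ) * (b k i l : ℂ)
              * (∑ t ∈ univ.filter (fun t => t ≠ k),
                  (Complex.normSq (∑ m, h k i m * p t m) : ℂ))
              * (Complex.normSq (V k i l) : ℂ)
            + (η k i l : ℂ) * (b k i l : ℂ) * (Complex.normSq (V k i l) : ℂ))) := by
    refine Finset.sum_congr rfl fun k _ => Finset.sum_congr rfl fun l _ =>
      Finset.sum_congr rfl fun i hi => ?_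
    rw [heq36 k l i (Finset.mem_filter.mp hi).2]
    simp only [← Complex.mul_conj]
    ring
  simp only [Finset.sum_add_distrib] at E36
  -- Equation (38) contracted with conj(p):
  have hL : (∑ k, ∑ m, (starRingEnd ℂ) (p k m) *
        (∑ l, ∑ i ∈ univ.filter (fun i => l ≤ i),
          (η k i l : ℂ) * (b k i l : ℂ) * (starRingEnd ℂ) (h k i m)
            * (starRingEnd ℂ) (V k i l) * (α k l : ℂ)))
      = ∑ k, ∑ l, ∑ i ∈ univ.filter (fun i => l ≤ i),
          (η k i l : ℂ) * (b k i l : ℂ) * (starRingEnd ℂ) (V k i l) *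
            ((α k l : ℂ) * (starRingEnd ℂ) (∑ m, h k i m * p k m)) := by
    refine Finset.sum_congr rfl fun k _ => ?_
    rw [sum_mul_sum_swap]
    refine Finset.sum_congr rfl fun l _ => ?_
    rw [sum_mul_sum_swap]
    refine Finset.sum_congr rfl fun i _ => ?_
    calc ∑ m, (starRingEnd ℂ) (p k m) *
          ((η k i l : ℂ) * (b k i l : ℂ) * (starRingEnd ℂ) (h k i m)
            * (starRingEnd ℂ) (V k i l) * (α k l : ℂ))
        = ∑ m, (starRingEnd ℂ) (p k m) * ((starRingEnd ℂ) (h k i m) *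
            ((η k i l : ℂ) * (b k i l : ℂ) * (starRingEnd ℂ) (V k i l) * (α k l : ℂ))) :=
          Finset.sum_congr rfl fun m _ => by ring
      _ = (starRingEnd ℂ) (∑ m, h k i m * p k m) *
            ((η k i l : ℂ) * (b k i l : ℂ) * (starRingEnd ℂ) (V k i l) * (α k l : ℂ)) :=
          inner_contract _ _ _
      _ = _ := by ring
  have hR1 : (∑ k, ∑ m, (starRingEnd ℂ) (p k m) *
        (∑ l, ∑ i ∈ univ.filter (fun i => l ≤ i), ∑ j ∈ univ.filter (fun j => l ≤ j),
          (α k j : ℂ) * (η k i l : ℂ) * (b k i l : ℂ) * (starRingEnd ℂ) (h k i m)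
            * (Complex.normSq (V k i l) : ℂ) * (∑ m', h k i m' * p k m')))
      = ∑ k, ∑ l, ∑ i ∈ univ.filter (fun i => l ≤ i),
          (η k i l : ℂ) * (b k i l : ℂ)
            * (∑ j ∈ univ.filter (fun j => l ≤ j), (α k j : ℂ))
            * (Complex.normSq (∑ m, h k i m * p k m) : ℂ)
            * (Complex.normSq (V k i l) : ℂ) := by
    refine Finset.sum_congr rfl fun k _ => ?_
    rw [sum_mul_sum_swap]
    refine Finset.sum_congr rfl fun l _ => ?_
    rw [sum_mul_sum_swap]
    refine Finset.sum_congr rfl fun i _ => ?_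
    rw [sum_mul_sum_swap]
    have expand : ∀ c1 c2 c3 : ℂ,
        c1 * (∑ j ∈ univ.filter (fun j => l ≤ j), (α k j : ℂ)) * c2 * c3
          = ∑ j ∈ univ.filter (fun j => l ≤ j), c1 * (α k j : ℂ) * c2 * c3 := by
      intro c1 c2 c3
      simp only [Finset.mul_sum, Finset.sum_mul]
    rw [expand]
    refine Finset.sum_congr rfl fun j _ => ?_
    calc ∑ m, (starRingEnd ℂ) (p k m) *
          ((α k j : ℂ) * (η k i l : ℂ) * (b k i l : ℂ) * (starRingEnd ℂ) (h k i m)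
            * (Complex.normSq (V k i l) : ℂ) * (∑ m', h k i m' * p k m'))
        = ∑ m, (starRingEnd ℂ) (p k m) * ((starRingEnd ℂ) (h k i m) *
            ((α k j : ℂ) * (η k i l : ℂ) * (b k i l : ℂ)
              * (Complex.normSq (V k i l) : ℂ) * (∑ m', h k i m' * p k m'))) :=
          Finset.sum_congr rfl fun m _ => by ring
      _ = (starRingEnd ℂ) (∑ m, h k i m * p k m) *
            ((α k j : ℂ) * (η k i l : ℂ) * (b k i l : ℂ)
              * (Complex.normSq (V k i l) : ℂ) * (∑ m', h k i m' * p k m')) :=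
          inner_contract _ _ _
      _ = (η k i l : ℂ) * (b k i l : ℂ) * (α k j : ℂ)
            * (Complex.normSq (∑ m, h k i m * p k m) : ℂ)
            * (Complex.normSq (V k i l) : ℂ) := by
          simp only [← Complex.mul_conj]
          ring
  have hR2 : (∑ k, ∑ m, (starRingEnd ℂ) (p k m) *
        (∑ t ∈ univ.filter (fun t => t ≠ k), ∑ l, ∑ i ∈ univ.filter (fun i => l ≤ i),
          (η t i l : ℂ) * (b t i l : ℂ) * (starRingEnd ℂ) (h t i m)
            * (Complex.normSq (V t i l) : ℂ) * (∑ m', h t i m' * p k m')))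
      = ∑ k, ∑ l, ∑ i ∈ univ.filter (fun i => l ≤ i),
          (η k i l : ℂ) * (b k i l : ℂ)
            * (∑ t ∈ univ.filter (fun t => t ≠ k),
                (Complex.normSq (∑ m, h k i m * p t m) : ℂ))
            * (Complex.normSq (V k i l) : ℂ) := by
    have step1 : (∑ k, ∑ m, (starRingEnd ℂ) (p k m) *
          (∑ t ∈ univ.filter (fun t => t ≠ k), ∑ l, ∑ i ∈ univ.filter (fun i => l ≤ i),
            (η t i l : ℂ) * (b t i l : ℂ) * (starRingEnd ℂ) (h t i m)
              * (Complex.normSq (V t i l) : ℂ) * (∑ m', h t i m' * p k m')))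
        = ∑ k, ∑ t ∈ univ.filter (fun t => t ≠ k), ∑ l, ∑ i ∈ univ.filter (fun i => l ≤ i),
            (η t i l : ℂ) * (b t i l : ℂ)
              * (Complex.normSq (∑ m, h t i m * p k m) : ℂ)
              * (Complex.normSq (V t i l) : ℂ) := by
      refine Finset.sum_congr rfl fun k _ => ?_
      rw [sum_mul_sum_swap]
      refine Finset.sum_congr rfl fun t _ => ?_
      rw [sum_mul_sum_swap]
      refine Finset.sum_congr rfl fun l _ => ?_
      rw [sum_mul_sum_swap]
      refine Finset.sum_congr rfl fun i _ => ?_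
      calc ∑ m, (starRingEnd ℂ) (p k m) *
            ((η t i l : ℂ) * (b t i l : ℂ) * (starRingEnd ℂ) (h t i m)
              * (Complex.normSq (V t i l) : ℂ) * (∑ m', h t i m' * p k m'))
          = ∑ m, (starRingEnd ℂ) (p k m) * ((starRingEnd ℂ) (h t i m) *
              ((η t i l : ℂ) * (b t i l : ℂ)
                * (Complex.normSq (V t i l) : ℂ) * (∑ m', h t i m' * p k m'))) :=
            Finset.sum_congr rfl fun m _ => by ring
        _ = (starRingEnd ℂ) (∑ m, h t i m * p k m) *
              ((η t i l : ℂ) * (b t i l : ℂ)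
                * (Complex.normSq (V t i l) : ℂ) * (∑ m', h t i m' * p k m')) :=
            inner_contract _ _ _
        _ = (η t i l : ℂ) * (b t i l : ℂ)
              * (Complex.normSq (∑ m, h t i m * p k m) : ℂ)
              * (Complex.normSq (V t i l) : ℂ) := by
            simp only [← Complex.mul_conj]
            ring
    rw [step1,
      offdiag_swap (fun a c => ∑ l, ∑ i ∈ univ.filter (fun i => l ≤ i),
        (η a i l : ℂ) * (b a i l : ℂ)
          * (Complex.normSq (∑ m, h a i m * p c m) : ℂ)
          * (Complex.normSq (V a i l) : ℂ))]
    refine Finset.sum_congr rfl fun k _ => ?_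
    rw [Finset.sum_comm]
    refine Finset.sum_congr rfl fun l _ => ?_
    rw [Finset.sum_comm]
    refine Finset.sum_congr rfl fun i _ => ?_
    rw [Finset.mul_sum, Finset.sum_mul]
  have hR3 : (∑ k, ∑ m, (starRingEnd ℂ) (p k m) * ((β : ℂ) * p k m))
      = (β : ℂ) * (E : ℂ) := by
    have hterm : ∀ k m, (starRingEnd ℂ) (p k m) * ((β : ℂ) * p k m)
        = (β : ℂ) * ((Complex.normSq (p k m) : ℝ) : ℂ) := fun k m => by
      rw [← Complex.mul_conj]; ring
    simp only [hterm, ← Finset.mul_sum]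
    congr 1
    rw [← hpow]
    push_cast
    rfl
  have E38 : (∑ k, ∑ l, ∑ i ∈ univ.filter (fun i => l ≤ i),
        (η k i l : ℂ) * (b k i l : ℂ) * (starRingEnd ℂ) (V k i l) *
          ((α k l : ℂ) * (starRingEnd ℂ) (∑ m, h k i m * p k m)))
      = (∑ k, ∑ l, ∑ i ∈ univ.filter (fun i => l ≤ i),
            (η k i l : ℂ) * (b k i l : ℂ)
              * (∑ j ∈ univ.filter (fun j => l ≤ j), (α k j : ℂ))
              * (Complex.normSq (∑ m, h k i m * p k m) : ℂ)
              * (Complex.normSq (V k i l) : ℂ))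
        + (∑ k, ∑ l, ∑ i ∈ univ.filter (fun i => l ≤ i),
            (η k i l : ℂ) * (b k i l : ℂ)
              * (∑ t ∈ univ.filter (fun t => t ≠ k),
                  (Complex.normSq (∑ m, h k i m * p t m) : ℂ))
              * (Complex.normSq (V k i l) : ℂ))
        + (β : ℂ) * (E : ℂ) := by
    rw [← hL, ← hR1, ← hR2, ← hR3]
    calc (∑ k, ∑ m, (starRingEnd ℂ) (p k m) *
          (∑ l, ∑ i ∈ univ.filter (fun i => l ≤ i),
            (η k i l : ℂ) * (b k i l : ℂ) * (starRingEnd ℂ) (h k i m)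
              * (starRingEnd ℂ) (V k i l) * (α k l : ℂ)))
        = ∑ k, ∑ m, (starRingEnd ℂ) (p k m) *
            ((∑ l, ∑ i ∈ univ.filter (fun i => l ≤ i), ∑ j ∈ univ.filter (fun j => l ≤ j),
                (α k j : ℂ) * (η k i l : ℂ) * (b k i l : ℂ) * (starRingEnd ℂ) (h k i m)
                  * (Complex.normSq (V k i l) : ℂ) * (∑ m', h k i m' * p k m'))
              + (∑ t ∈ univ.filter (fun t => t ≠ k), ∑ l, ∑ i ∈ univ.filter (fun i => l ≤ i),
                  (η t i l : ℂ) * (b t i l : ℂ) * (starRingEnd ℂ) (h t i m)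
                    * (Complex.normSq (V t i l) : ℂ) * (∑ m', h t i m' * p k m'))
              + (β : ℂ) * p k m) :=
          Finset.sum_congr rfl fun k _ => Finset.sum_congr rfl fun m _ => by
            rw [heq38 k m]
      _ = _ := by simp only [mul_add, Finset.sum_add_distrib]
  have hW : (∑ k, ∑ l, ∑ i ∈ univ.filter (fun i => l ≤ i),
        (η k i l : ℂ) * (b k i l : ℂ) * (Complex.normSq (V k i l) : ℂ))
      = (β : ℂ) * (E : ℂ) := by
    have h1 := E36.symm.trans E38
    exact add_left_cancel h1
  have hWr : (∑ k, ∑ l, ∑ i ∈ univ.filter (fun i => l ≤ i),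
        η k i l * b k i l * Complex.normSq (V k i l)) = β * E := by
    push_cast at hW
    exact_mod_cast hW
  rw [hWr, mul_comm β E, inv_mul_cancel_left₀ hE.ne']
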